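/- Let (E,d) be an (ε,λ)-complete random metric space with base (Ω,𝓕,P) and T : E → E a map such that for some n ∈ ℕ and some α ∈ L⁰₊(𝓕) with α < 1 a.s., d(Tⁿ(x),Tⁿ(y)) ≤ α·d(x,y) for all x,y ∈ E. Then T has a unique fixed point. -/

import Mathlib

open MeasureTheory Filter Set

variable {Ω : Type*} [MeasurableSpace Ω]

/-- `(E,d)` is a random metric space with base `(Ω,𝓕,μ)`: `d x y` represents an element of
`L⁰₊(𝓕)` (nonnegative a.e.), equality/inequality of distances being understood a.e. -/
structure IsRandomMetric (μ : Measure Ω) {E : Type*} (d : E → E → Ω → ℝ) : Prop where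
  meas : ∀ x y, Measurable (d x y)
  nonneg : ∀ x y, ∀ᵐ ω ∂μ, 0 ≤ d x y ω
  eq_zero_iff : ∀ x y, (d x y =ᵐ[μ] 0) ↔ x = y
  symm : ∀ x y, d x y =ᵐ[μ] d y x
  triangle : ∀ x y z, ∀ᵐ ω ∂μ, d x z ω ≤ d x y ω + d y z ω

/-- Cauchy sequence for the `(ε,λ)`-uniformity with base
`U(ε,λ) = {(x,y) : μ (d(x,y) < ε) > 1 − λ}`. -/
def ELCauchy (μ : Measure Ω) {E : Type*} (d : E → E → Ω → ℝ) (s : ℕ → E) : Prop :=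
  ∀ ε : ℝ, 0 < ε → ∀ l : ℝ, 0 < l → l < 1 →
    ∃ N, ∀ m ≥ N, ∀ n ≥ N, μ {ω | d (s m) (s n) ω < ε} > ENNReal.ofReal (1 - l)

/-- Convergence for the `(ε,λ)`-uniformity (convergence in probability of distances). -/
def ELTendsto (μ : Measure Ω) {E : Type*} (d : E → E → Ω → ℝ) (s : ℕ → E) (x : E) : Prop :=
  ∀ ε : ℝ, 0 < ε → ∀ l : ℝ, 0 < l → l < 1 →
    ∃ N, ∀ n ≥ N, μ {ω | d (s n) x ω < ε} > ENNReal.ofReal (1 - l)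

/-- `(ε,λ)`-completeness: the metrizable `(ε,λ)`-uniformity is complete. -/
def ELComplete (μ : Measure Ω) {E : Type*} (d : E → E → Ω → ℝ) : Prop :=
  ∀ s : ℕ → E, ELCauchy μ d s → ∃ x, ELTendsto μ d s x

section Aux

variable {μ : Measure Ω} [IsProbabilityMeasure μ]

lemma aux_gt_of_compl_lt {s : Set Ω} (hs : MeasurableSet s) {l : ℝ} (hl : 0 < l) (hl1 : l < 1)
    (h : μ sᶜ < ENNReal.ofReal l) : μ s > ENNReal.ofReal (1 - l) := by
  by_contra hc
  push_neg at hc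
  have h1 : μ s + μ sᶜ = 1 := by rw [measure_add_measure_compl hs, measure_univ]
  have h2 : ENNReal.ofReal (1 - l) + ENNReal.ofReal l = 1 := by
    rw [← ENNReal.ofReal_add (by linarith) hl.le]
    norm_num
  have h3 := ENNReal.add_lt_add_of_le_of_lt (measure_ne_top μ s) hc h
  rw [h1, h2] at h3
  exact lt_irrefl _ h3

lemma aux_compl_lt_of_gt {s : Set Ω} (hs : MeasurableSet s) {l : ℝ} (hl : 0 < l) (hl1 : l < 1)
    (h : μ s > ENNReal.ofReal (1 - l)) : μ sᶜ < ENNReal.ofReal l := by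
  by_contra hc
  push_neg at hc
  have h1 : μ s + μ sᶜ = 1 := by rw [measure_add_measure_compl hs, measure_univ]
  have h2 : ENNReal.ofReal (1 - l) + ENNReal.ofReal l = 1 := by
    rw [← ENNReal.ofReal_add (by linarith) hl.le]
    norm_num
  have h3 := ENNReal.add_lt_add_of_le_of_lt ENNReal.ofReal_ne_top hc h
  rw [add_comm (μ sᶜ) (μ s), h1, add_comm] at h3
  rw [h2] at h3
  exact lt_irrefl _ h3

lemma aux_ae_zero {g : Ω → ℝ} (hg : Measurable g) (hnn : ∀ᵐ ω ∂μ, 0 ≤ g ω)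
    (h : ∀ ε : ℝ, 0 < ε → ∀ l : ℝ, 0 < l → l < 1 →
      μ {ω | g ω < ε} > ENNReal.ofReal (1 - l)) :
    g =ᵐ[μ] 0 := by
  have key : ∀ ε : ℝ, 0 < ε → μ {ω | ε ≤ g ω} = 0 := by
    intro ε hε
    by_contra hne
    have hpos : 0 < μ {ω | ε ≤ g ω} := pos_iff_ne_zero.mpr hne
    set r : ℝ := (μ {ω | ε ≤ g ω}).toReal with hr
    have hfin : μ {ω | ε ≤ g ω} ≠ ⊤ := measure_ne_top μ _
    have hrpos : 0 < r := ENNReal.toReal_pos hne hfin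
    set l : ℝ := min r 1 / 2 with hldef
    have hlpos : 0 < l := by positivity
    have hl1 : l < 1 := by
      have : min r 1 ≤ 1 := min_le_right _ _
      simp only [hldef]; linarith
    have hlr : l < r := by
      have : min r 1 ≤ r := min_le_left _ _
      simp only [hldef]; linarith
    have hcompl : μ {ω | g ω < ε}ᶜ < ENNReal.ofReal l :=
      aux_compl_lt_of_gt (measurableSet_lt hg measurable_const) hlpos hl1 (h ε hε l hlpos hl1)
    have hceq : {ω | g ω < ε}ᶜ = {ω | ε ≤ g ω} := by
      ext ω; simp [not_lt]
    rw [hceq] at hcompl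
    have : μ {ω | ε ≤ g ω} = ENNReal.ofReal r := by
      rw [hr, ENNReal.ofReal_toReal hfin]
    rw [this] at hcompl
    exact absurd hcompl (not_lt.mpr (ENNReal.ofReal_le_ofReal hlr.le))
  have hU : μ {ω | 0 < g ω} = 0 := by
    have hset : {ω | 0 < g ω} ⊆ ⋃ k : ℕ, {ω | 1 / (k + 1 : ℝ) ≤ g ω} := by
      intro ω hω
      obtain ⟨k, hk⟩ := exists_nat_one_div_lt (show (0:ℝ) < g ω from hω)
      exact mem_iUnion.mpr ⟨k, hk.le⟩
    refine measure_mono_null hset (measure_iUnion_null fun k => key _ (by positivity))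
  have hng : ∀ᵐ ω ∂μ, ¬ 0 < g ω := by
    rw [ae_iff]; simpa using hU
  filter_upwards [hnn, hng] with ω h1 h2
  simp only [Pi.zero_apply]
  linarith [not_lt.mp h2]

lemma aux_geom {a : ℝ} (h0 : 0 ≤ a) (h1 : a < 1) (m k : ℕ) :
    (∑ j ∈ Finset.range k, a ^ (m + j)) ≤ a ^ m / (1 - a) := by
  have hpos : 0 < 1 - a := by linarith
  have hsum : ∑ j ∈ Finset.range k, a ^ j ≤ 1 / (1 - a) := by
    have hgeom : ∑ j ∈ Finset.range k, a ^ j = (a ^ k - 1) / (a - 1) := geom_sum_eq h1.ne k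
    have hx : (a ^ k - 1) / (a - 1) = (1 - a ^ k) / (1 - a) := by
      rw [← neg_div_neg_eq]; ring_nf
    rw [hgeom, hx, div_le_div_iff₀ hpos hpos]
    nlinarith [pow_nonneg h0 k]
  have heq : ∑ j ∈ Finset.range k, a ^ (m + j) = a ^ m * ∑ j ∈ Finset.range k, a ^ j := by
    rw [Finset.mul_sum]
    exact Finset.sum_congr rfl fun j _ => pow_add a m j
  rw [heq, div_eq_mul_one_div]
  exact mul_le_mul_of_nonneg_left hsum (pow_nonneg h0 m)

end Aux

/-- fixed point for mappings with a contractive iterate. -/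
theorem random_contraction_iterate_fixed_point {E : Type*} [Nonempty E]
    (μ : Measure Ω) [IsProbabilityMeasure μ]
    (d : E → E → Ω → ℝ) (hd : IsRandomMetric μ d) (hcomp : ELComplete μ d)
    (T : E → E) (n : ℕ)
    (α : Ω → ℝ) (hαm : Measurable α)
    (hα0 : ∀ᵐ ω ∂μ, 0 ≤ α ω) (hα1 : ∀ᵐ ω ∂μ, α ω < 1)
    (hT : ∀ x y, ∀ᵐ ω ∂μ, d (T^[n] x) (T^[n] y) ω ≤ α ω * d x y ω) :
    ∃! x : E, T x = x := by
  classical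
  set S : E → E := T^[n] with hS
  have hcon : ∀ x y, ∀ᵐ ω ∂μ, d (S x) (S y) ω ≤ α ω * d x y ω := hT
  -- uniqueness among fixed points of S
  have huniq : ∀ x y : E, S x = x → S y = y → x = y := by
    intro x y hx hy
    have h1 : ∀ᵐ ω ∂μ, d x y ω ≤ α ω * d x y ω := by
      have := hcon x y
      rwa [hx, hy] at this
    have hz : d x y =ᵐ[μ] 0 := by
      filter_upwards [h1, hα1, hd.nonneg x y] with ω hω hαω hnn
      simp only [Pi.zero_apply]
      nlinarith
    exact (hd.eq_zero_iff x y).mp hz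
  -- existence of a fixed point of S
  obtain ⟨x₀⟩ := ‹Nonempty E›
  set s : ℕ → E := fun k => S^[k] x₀ with hs
  set c : Ω → ℝ := d x₀ (S x₀) with hc
  set f : ℕ → Ω → ℝ := fun k ω => α ω ^ k * c ω / (1 - α ω) with hf
  have hs_succ : ∀ k, s (k + 1) = S (s k) := fun k => Function.iterate_succ_apply' S k x₀
  have B1 : ∀ k, ∀ᵐ ω ∂μ, d (s k) (s (k + 1)) ω ≤ α ω ^ k * c ω := by
    intro k
    induction k with
    | zero =>
      filter_upwards with ω
      simp only [pow_zero, one_mul]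
      have : s 0 = x₀ := rfl
      rw [this, hs_succ 0, this, hc]
    | succ k ih =>
      filter_upwards [ih, hcon (s k) (s (k + 1)), hα0, hd.nonneg (s k) (s (k + 1))]
        with ω h1 h2 h3 h4
      rw [hs_succ (k + 1), hs_succ k] at *
      calc d (S (s k)) (S (S (s k))) ω ≤ α ω * d (s k) (S (s k)) ω := h2
        _ ≤ α ω * (α ω ^ k * c ω) := by nlinarith
        _ = α ω ^ (k + 1) * c ω := by ring
  have B2 : ∀ m k, ∀ᵐ ω ∂μ,
      d (s m) (s (m + k)) ω ≤ (∑ j ∈ Finset.range k, α ω ^ (m + j)) * c ω := by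
    intro m k
    induction k with
    | zero =>
      have h0 : d (s m) (s m) =ᵐ[μ] 0 := (hd.eq_zero_iff (s m) (s m)).mpr rfl
      filter_upwards [h0] with ω hω
      simp [hω]
    | succ k ih =>
      filter_upwards [ih, B1 (m + k), hd.triangle (s m) (s (m + k)) (s (m + k + 1))]
        with ω h1 h2 h3
      rw [Finset.sum_range_succ, add_mul]
      have : m + (k + 1) = m + k + 1 := by ring
      rw [this]
      linarith
  have B4 : ∀ N m k, N ≤ m → ∀ᵐ ω ∂μ, d (s m) (s (m + k)) ω ≤ f N ω := by
    intro N m k hNm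
    filter_upwards [B2 m k, hα0, hα1, hd.nonneg x₀ (S x₀)] with ω h1 h2 h3 h4
    have hpos : 0 < 1 - α ω := by linarith
    calc d (s m) (s (m + k)) ω ≤ (∑ j ∈ Finset.range k, α ω ^ (m + j)) * c ω := h1
      _ ≤ (α ω ^ m / (1 - α ω)) * c ω :=
        mul_le_mul_of_nonneg_right (aux_geom h2 h3 m k) h4
      _ ≤ (α ω ^ N / (1 - α ω)) * c ω := by
        have hpow : α ω ^ m ≤ α ω ^ N := pow_le_pow_of_le_one h2 h3.le hNm
        have : α ω ^ m / (1 - α ω) ≤ α ω ^ N / (1 - α ω) := by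
          gcongr
        exact mul_le_mul_of_nonneg_right this h4
      _ = f N ω := by rw [hf]; ring
  have B5 : ∀ N m k, N ≤ m → N ≤ k → ∀ᵐ ω ∂μ, d (s m) (s k) ω ≤ f N ω := by
    intro N m k hNm hNk
    rcases le_total m k with h | h
    · obtain ⟨j, rfl⟩ := Nat.exists_eq_add_of_le h
      exact B4 N m j hNm
    · obtain ⟨j, rfl⟩ := Nat.exists_eq_add_of_le h
      filter_upwards [B4 N k j hNk, hd.symm (s (k + j)) (s k)] with ω h1 h2
      rw [h2]; exact h1
  -- convergence in measure of f to 0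
  have hfmeas : ∀ k, Measurable (f k) := by
    intro k
    exact ((hαm.pow_const k).mul (hd.meas x₀ (S x₀))).div (measurable_const.sub hαm)
  have hftendsto : ∀ᵐ ω ∂μ, Tendsto (fun k => f k ω) atTop (nhds 0) := by
    filter_upwards [hα0, hα1] with ω h0 h1
    have := tendsto_pow_atTop_nhds_zero_of_lt_one h0 h1
    have h2 := (this.mul_const (c ω)).div_const (1 - α ω)
    simpa using h2
  have htm : MeasureTheory.TendstoInMeasure μ f atTop (0 : Ω → ℝ) :=
    MeasureTheory.tendstoInMeasure_of_tendsto_ae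
      (fun k => (hfmeas k).aestronglyMeasurable) (by simpa using hftendsto)
  -- the orbit is Cauchy
  have hC : ELCauchy μ d s := by
    intro ε hε l hl hl1
    have hlim := htm (ENNReal.ofReal ε) (ENNReal.ofReal_pos.mpr hε)
    have hev : ∀ᶠ N in atTop,
        μ {ω | ε ≤ dist (f N ω) ((0 : Ω → ℝ) ω)} < ENNReal.ofReal l := by
      have hseteq : ∀ N, {ω | ε ≤ dist (f N ω) ((0 : Ω → ℝ) ω)} =
          {ω | ENNReal.ofReal ε ≤ edist (f N ω) ((0 : Ω → ℝ) ω)} := by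
        intro N; ext ω
        simp only [mem_setOf_eq, edist_dist, ENNReal.ofReal_le_ofReal_iff dist_nonneg]
      filter_upwards [hlim.eventually_lt_const (ENNReal.ofReal_pos.mpr hl)] with N hN
      rw [hseteq N]; exact hN
    obtain ⟨N, hN⟩ := eventually_atTop.mp hev
    refine ⟨N, fun m hm k hk => ?_⟩
    have hsub : μ {ω | d (s m) (s k) ω < ε}ᶜ ≤
        μ {ω | ε ≤ dist (f N ω) ((0 : Ω → ℝ) ω)} := by
      apply measure_mono_ae
      filter_upwards [B5 N m k hm hk] with ω h1
      intro hω
      have hω' : ε ≤ d (s m) (s k) ω := not_lt.mp hω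
      show ε ≤ dist (f N ω) ((0 : Ω → ℝ) ω)
      rw [Pi.zero_apply, Real.dist_eq, sub_zero]
      exact le_trans (le_trans hω' h1) (le_abs_self _)
    have hlt : μ {ω | d (s m) (s k) ω < ε}ᶜ < ENNReal.ofReal l :=
      lt_of_le_of_lt hsub (hN N le_rfl)
    exact aux_gt_of_compl_lt (measurableSet_lt (hd.meas _ _) measurable_const) hl hl1 hlt
  obtain ⟨x, hx⟩ := hcomp s hC
  -- x is a fixed point of S
  have hSx : S x = x := by
    apply (hd.eq_zero_iff (S x) x).mp
    apply aux_ae_zero (hd.meas _ _) (hd.nonneg _ _)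
    intro ε hε l hl hl1
    obtain ⟨N, hN⟩ := hx (ε / 2) (by linarith) (l / 2) (by linarith) (by linarith)
    set A := {ω | d (s N) x ω < ε / 2} ∩ {ω | d (s (N + 1)) x ω < ε / 2} with hA
    have hAm : MeasurableSet A :=
      (measurableSet_lt (hd.meas _ _) measurable_const).inter
        (measurableSet_lt (hd.meas _ _) measurable_const)
    have hsub : ∀ᵐ ω ∂μ, ω ∈ A → d (S x) x ω < ε := by
      filter_upwards [hcon x (s N), hα0, hα1, hd.nonneg x (s N),
        hd.triangle (S x) (S (s N)) x, hd.symm x (s N)] with ω h1 h2 h3 h4 h5 h6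
      intro hω
      obtain ⟨hω1, hω2⟩ := hω
      simp only [mem_setOf_eq] at hω1 hω2
      rw [← hs_succ N] at h5
      have hb1 : d (S x) (s (N + 1)) ω ≤ d x (s N) ω := by
        rw [hs_succ N]
        calc d (S x) (S (s N)) ω ≤ α ω * d x (s N) ω := h1
          _ ≤ d x (s N) ω := by nlinarith
      have : d x (s N) ω < ε / 2 := by rw [h6]; exact hω1
      linarith [h5]
    have hAc : μ Aᶜ < ENNReal.ofReal l := by
      have h1 : μ {ω | d (s N) x ω < ε / 2}ᶜ < ENNReal.ofReal (l / 2) :=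
        aux_compl_lt_of_gt (measurableSet_lt (hd.meas _ _) measurable_const)
          (by linarith) (by linarith) (hN N le_rfl)
      have h2 : μ {ω | d (s (N + 1)) x ω < ε / 2}ᶜ < ENNReal.ofReal (l / 2) :=
        aux_compl_lt_of_gt (measurableSet_lt (hd.meas _ _) measurable_const)
          (by linarith) (by linarith) (hN (N + 1) (Nat.le_succ N))
      have hAceq : Aᶜ = {ω | d (s N) x ω < ε / 2}ᶜ ∪ {ω | d (s (N + 1)) x ω < ε / 2}ᶜ := by
        rw [hA, compl_inter]
      calc μ Aᶜ ≤ μ {ω | d (s N) x ω < ε / 2}ᶜ + μ {ω | d (s (N + 1)) x ω < ε / 2}ᶜ := by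
            rw [hAceq]; exact measure_union_le _ _
        _ < ENNReal.ofReal (l / 2) + ENNReal.ofReal (l / 2) := ENNReal.add_lt_add h1 h2
        _ = ENNReal.ofReal l := by
            rw [← ENNReal.ofReal_add (by linarith) (by linarith)]; ring_nf
    have hAlarge : μ A > ENNReal.ofReal (1 - l) := aux_gt_of_compl_lt hAm hl hl1 hAc
    have hmono : μ A ≤ μ {ω | d (S x) x ω < ε} := measure_mono_ae hsub
    exact lt_of_lt_of_le hAlarge hmono
  -- conclude for T
  refine ⟨x, ?_, ?_⟩
  · have hTx : S (T x) = T x := by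
      calc S (T x) = T^[n] (T x) := rfl
        _ = T (T^[n] x) := by
            rw [← Function.iterate_succ_apply, Function.iterate_succ_apply']
        _ = T x := by rw [← hS, hSx]
    exact huniq (T x) x hTx hSx
  · intro y hy
    exact huniq y x (Function.iterate_fixed hy n) hSx
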